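/- For every integer h, every integer m ≥ 0 and every real number x, q^x · E_{m,q}^{(h,1)}(x) = (q−1) E_{m+1,q}^{(h−1,1)}(x) + E_{m,q}^{(h−1,1)}(x). -/

import Mathlib

open Finset

/-- The q-number `[x]_q = (1 - q^x)/(1 - q)`, with `q^x = exp (x * log q)` (rpow). -/
noncomputable def qNum (q x : ℝ) : ℝ := (1 - q ^ x) / (1 - q)

/-- `[l]_{-q} = (1 - (-q)^l)/(1 + q)` for a natural number `l`. -/
noncomputable def qNumNeg (q : ℝ) (l : ℕ) : ℝ := (1 - (-q) ^ l) / (1 + q)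

/-- The higher-order q-Euler polynomial
`E_{m,q}^{(h,k)}(x) = ((1+q)^k/(1-q)^m) * Σ_{j=0}^m C(m,j) (-1)^j q^{jx} / Π_{i=0}^{k-1} (1 + q^{h+j-i})`. -/
noncomputable def qE (q : ℝ) (h : ℤ) (k m : ℕ) (x : ℝ) : ℝ :=
  ((1 + q) ^ k / (1 - q) ^ m) *
    ∑ j ∈ Finset.range (m + 1),
      (m.choose j : ℝ) * (-1) ^ j * q ^ ((j : ℝ) * x) /
        ∏ i ∈ Finset.range k, (1 + q ^ ((h : ℝ) + (j : ℝ) - (i : ℝ)))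


lemma key (q : ℝ) (hq : 0 < q) (c x : ℝ) (m : ℕ) :
    ∑ j ∈ Finset.range (m + 2),
        ((m+1).choose j : ℝ) * (-1) ^ j * q ^ ((j : ℝ) * x) / (1 + q ^ (c + (j : ℝ)))
    = ∑ j ∈ Finset.range (m + 1),
        (m.choose j : ℝ) * (-1) ^ j * q ^ ((j : ℝ) * x) / (1 + q ^ (c + (j : ℝ)))
      - q ^ x * ∑ j ∈ Finset.range (m + 1),
        (m.choose j : ℝ) * (-1) ^ j * q ^ ((j : ℝ) * x) / (1 + q ^ (c + 1 + (j : ℝ))) := by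
  rw [Finset.sum_range_succ' _ (m + 1)]
  have step : ∀ j ∈ Finset.range (m + 1),
      (((m+1).choose (j+1) : ℝ)) * (-1) ^ (j+1) * q ^ (((j+1 : ℕ) : ℝ) * x) / (1 + q ^ (c + ((j+1 : ℕ) : ℝ)))
      = (m.choose (j+1) : ℝ) * (-1) ^ (j+1) * q ^ (((j+1 : ℕ) : ℝ) * x) / (1 + q ^ (c + ((j+1 : ℕ) : ℝ)))
        + (-(q ^ x)) * ((m.choose j : ℝ) * (-1) ^ j * q ^ ((j : ℝ) * x) / (1 + q ^ (c + 1 + (j : ℝ)))) := by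
    intro j _
    have hcast : (((m+1).choose (j+1) : ℝ)) = (m.choose (j+1) : ℝ) + (m.choose j : ℝ) := by
      rw [Nat.choose_succ_succ]; push_cast; ring
    have hexp : q ^ x * q ^ ((j : ℝ) * x) = q ^ (((j+1 : ℕ) : ℝ) * x) := by
      rw [← Real.rpow_add hq]; push_cast; ring_nf
    have hden : c + 1 + (j : ℝ) = c + ((j+1 : ℕ) : ℝ) := by push_cast; ring
    rw [hcast, hden, ← hexp]
    ring
  rw [Finset.sum_congr rfl step, Finset.sum_add_distrib, ← Finset.mul_sum]
  have h2 : ∑ j ∈ Finset.range (m + 1),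
      (m.choose (j+1) : ℝ) * (-1) ^ (j+1) * q ^ (((j+1 : ℕ) : ℝ) * x) / (1 + q ^ (c + ((j+1 : ℕ) : ℝ)))
      + ((m+1).choose 0 : ℝ) * (-1) ^ 0 * q ^ (((0:ℕ) : ℝ) * x) / (1 + q ^ (c + ((0:ℕ) : ℝ)))
      = ∑ j ∈ Finset.range (m + 1),
        (m.choose j : ℝ) * (-1) ^ j * q ^ ((j : ℝ) * x) / (1 + q ^ (c + (j : ℝ))) := by
    have := Finset.sum_range_succ' (fun j => (m.choose j : ℝ) * (-1) ^ j * q ^ ((j : ℝ) * x) / (1 + q ^ (c + (j : ℝ)))) (m + 1)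
    rw [Finset.sum_range_succ] at this
    norm_num [Nat.choose_succ_self] at this ⊢
    linarith [this]
  linarith [h2]

theorem stmt_5' (q : ℝ) (hq : 0 < q) (hq1 : q ≠ 1) (h : ℤ) (m : ℕ) (x : ℝ) :
    q ^ x * (((1 + q) ^ 1 / (1 - q) ^ m) *
    ∑ j ∈ Finset.range (m + 1),
      (m.choose j : ℝ) * (-1) ^ j * q ^ ((j : ℝ) * x) /
        ∏ i ∈ Finset.range 1, (1 + q ^ ((h : ℝ) + (j : ℝ) - (i : ℝ)))) =
    (q - 1) * (((1 + q) ^ 1 / (1 - q) ^ (m+1)) *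
    ∑ j ∈ Finset.range (m + 1 + 1),
      ((m+1).choose j : ℝ) * (-1) ^ j * q ^ ((j : ℝ) * x) /
        ∏ i ∈ Finset.range 1, (1 + q ^ (((h-1 : ℤ) : ℝ) + (j : ℝ) - (i : ℝ)))) +
    (((1 + q) ^ 1 / (1 - q) ^ m) *
    ∑ j ∈ Finset.range (m + 1),
      (m.choose j : ℝ) * (-1) ^ j * q ^ ((j : ℝ) * x) /
        ∏ i ∈ Finset.range 1, (1 + q ^ (((h-1 : ℤ) : ℝ) + (j : ℝ) - (i : ℝ)))) := by
  have h1q : (1 : ℝ) - q ≠ 0 := sub_ne_zero.mpr (Ne.symm hq1)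
  have h1qm : ((1 : ℝ) - q) ^ m ≠ 0 := pow_ne_zero _ h1q
  simp only [Finset.prod_range_one, Nat.cast_zero, CharP.cast_eq_zero, sub_zero, pow_one]
  have S1eq : (∑ j ∈ Finset.range (m + 1),
      (m.choose j : ℝ) * (-1) ^ j * q ^ ((j : ℝ) * x) / (1 + q ^ ((h : ℝ) + (j : ℝ)))) =
      ∑ j ∈ Finset.range (m + 1),
      (m.choose j : ℝ) * (-1) ^ j * q ^ ((j : ℝ) * x) / (1 + q ^ (((h : ℝ) - 1) + 1 + (j : ℝ))) :=
    Finset.sum_congr rfl fun j _ => by rw [show (h:ℝ)+(j:ℝ) = ((h:ℝ)-1)+1+(j:ℝ) by ring]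
  have S2eq : (∑ j ∈ Finset.range (m + 1 + 1),
      ((m+1).choose j : ℝ) * (-1) ^ j * q ^ ((j : ℝ) * x) / (1 + q ^ (((h-1 : ℤ) : ℝ) + (j : ℝ)))) =
      ∑ j ∈ Finset.range (m + 2),
      ((m+1).choose j : ℝ) * (-1) ^ j * q ^ ((j : ℝ) * x) / (1 + q ^ (((h : ℝ) - 1) + (j : ℝ))) :=
    Finset.sum_congr rfl fun j _ => by push_cast; ring_nf
  have S3eq : (∑ j ∈ Finset.range (m + 1),
      (m.choose j : ℝ) * (-1) ^ j * q ^ ((j : ℝ) * x) / (1 + q ^ (((h-1 : ℤ) : ℝ) + (j : ℝ)))) =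
      ∑ j ∈ Finset.range (m + 1),
      (m.choose j : ℝ) * (-1) ^ j * q ^ ((j : ℝ) * x) / (1 + q ^ (((h : ℝ) - 1) + (j : ℝ))) :=
    Finset.sum_congr rfl fun j _ => by push_cast; ring_nf
  rw [S1eq, S2eq, S3eq, key q hq ((h:ℝ)-1) x m]
  generalize (∑ j ∈ Finset.range (m + 1),
      (m.choose j : ℝ) * (-1) ^ j * q ^ ((j : ℝ) * x) / (1 + q ^ (((h : ℝ) - 1) + 1 + (j : ℝ)))) = A
  generalize (∑ j ∈ Finset.range (m + 1),
      (m.choose j : ℝ) * (-1) ^ j * q ^ ((j : ℝ) * x) / (1 + q ^ (((h : ℝ) - 1) + (j : ℝ)))) = B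
  field_simp
  ring

theorem stmt_5 (q : ℝ) (hq : 0 < q) (hq1 : q ≠ 1) (h : ℤ) (m : ℕ) (x : ℝ) :
    q ^ x * qE q h 1 m x = (q - 1) * qE q (h - 1) 1 (m + 1) x + qE q (h - 1) 1 m x := by
  unfold qE
  exact stmt_5' q hq hq1 h m x
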